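/- Let Cat₀ be the portion of the catenoid Cat = {x ∈ ℝ³ : cosh²(x₃) = x₁² + x₂²} with |x₃| < t₀, where t₀ > 0 satisfies cosh(t₀) = t₀·sinh(t₀). Then for every point x ∈ Cat₀, the open ray from the origin through x intersects Cat₀ in exactly the one point x. -/

import Mathlib

open Real Set Pointwise

abbrev R3 := EuclideanSpace ℝ (Fin 3)

/-- The middle portion `Cat₀` of the standard vertical catenoid: the points with
`|x₃| < t₀`. -/
def Cat0 (t₀ : ℝ) : Set R3 :=
  {x | Real.cosh (x 2) ^ 2 = x 0 ^ 2 + x 1 ^ 2 ∧ |x 2| < t₀}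

lemma phi_strictMono : StrictMonoOn (fun s => s * Real.sinh s - Real.cosh s) (Set.Ici 0) := by
  apply strictMonoOn_of_deriv_pos (convex_Ici 0)
  · fun_prop
  · intro s hs
    rw [interior_Ici] at hs
    have hD : HasDerivAt (fun s => s * Real.sinh s - Real.cosh s) (s * Real.cosh s) s := by
      have h1 : HasDerivAt (fun s : ℝ => s * Real.sinh s)
          (1 * Real.sinh s + s * Real.cosh s) s :=
        (hasDerivAt_id s).mul (Real.hasDerivAt_sinh s)
      have h2 := h1.sub (Real.hasDerivAt_cosh s)
      refine h2.congr_deriv ?_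
      ring
    rw [hD.deriv]
    exact mul_pos hs (Real.cosh_pos s)

lemma h_anti (t₀ : ℝ) (ht₀ : 0 < t₀) (heq : Real.cosh t₀ = t₀ * Real.sinh t₀) :
    StrictAntiOn (fun s => Real.cosh s / s) (Set.Ioo 0 t₀) := by
  apply strictAntiOn_of_deriv_neg (convex_Ioo 0 t₀)
  · exact Real.continuous_cosh.continuousOn.div continuousOn_id
      (fun s hs => ne_of_gt hs.1)
  · intro s hs
    rw [interior_Ioo] at hs
    have hs0 : (id s : ℝ) ≠ 0 := ne_of_gt hs.1
    have hD : HasDerivAt (fun s => Real.cosh s / s)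
        ((Real.sinh s * s - Real.cosh s * 1) / s ^ 2) s :=
      (Real.hasDerivAt_cosh s).div (hasDerivAt_id s) hs0
    rw [hD.deriv]
    apply div_neg_of_neg_of_pos
    · have := phi_strictMono (le_of_lt hs.1) (le_of_lt ht₀) hs.2
      simp only at this
      nlinarith [this]
    · positivity

/-- For every `x ∈ Cat₀`, the open ray from the origin through `x` meets `Cat₀`
exactly at `x`: if `λ • x ∈ Cat₀` for some `λ > 0`, then `λ = 1`. -/
theorem stmt4 (t₀ : ℝ) (ht₀ : 0 < t₀) (heq : Real.cosh t₀ = t₀ * Real.sinh t₀)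
    (x : R3) (hx : x ∈ Cat0 t₀) :
    ∀ l : ℝ, 0 < l → l • x ∈ Cat0 t₀ → l = 1 := by
  intro l hl hlx
  obtain ⟨hx1, hx2⟩ := hx
  obtain ⟨hl1, hl2⟩ := hlx
  simp only [PiLp.smul_apply, smul_eq_mul] at hl1 hl2
  set t := x 2 with ht
  -- key : cosh (l*t) = l * cosh t
  have hkey : Real.cosh (l * t) = l * Real.cosh t := by
    have h2 : Real.cosh (l * t) ^ 2 = (l * Real.cosh t) ^ 2 := by
      rw [hl1]; linear_combination -l^2 * hx1
    have hc1 : (0:ℝ) ≤ Real.cosh (l * t) := (Real.cosh_pos _).le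
    have hc2 : (0:ℝ) ≤ l * Real.cosh t := by positivity
    exact (sq_eq_sq₀ hc1 hc2).mp h2
  by_cases h0 : t = 0
  · rw [h0] at hkey
    simp at hkey
    linarith
  · have hs : |t| ∈ Set.Ioo (0:ℝ) t₀ := ⟨abs_pos.mpr h0, hx2⟩
    have hls : l * |t| ∈ Set.Ioo (0:ℝ) t₀ := by
      constructor
      · positivity
      · calc l * |t| = |l * t| := by rw [abs_mul, abs_of_pos hl]
          _ < t₀ := hl2
    have hkey' : Real.cosh (l * |t|) = l * Real.cosh |t| := by
      rw [Real.cosh_abs]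
      calc Real.cosh (l * |t|) = Real.cosh |l * t| := by rw [abs_mul, abs_of_pos hl]
        _ = Real.cosh (l * t) := Real.cosh_abs _
        _ = l * Real.cosh t := hkey
    have hdiv : Real.cosh (l * |t|) / (l * |t|) = Real.cosh |t| / |t| := by
      rw [hkey', mul_div_mul_left _ _ (ne_of_gt hl)]
    have := (h_anti t₀ ht₀ heq).injOn hls hs hdiv
    have habs : |t| ≠ 0 := abs_ne_zero.mpr h0
    field_simp at this
    nlinarith [abs_pos.mpr h0]
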